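/- arXiv:1801.00261 — 5 statements merged into one kernel-verified Lean document; each statement's English description precedes it below -/
import Mathlib

section
/- Let S be a nonempty closed convex subset of R^m and Π_S the metric projection onto S. Then for all u, v, w in R^m: 2⟨Π_S(w+u) − Π_S(w+v), u⟩ ≤ ‖u−v‖² + ‖Π_S(w+u) − w‖² − ‖Π_S(w+v) − w‖². -/
open scoped RealInnerProductSpace

/-- `P` is the metric projection onto `S`. -/
def IsProjOn {E : Type*} [NormedAddCommGroup E] (S : Set E) (P : E → E) : Prop :=
  ∀ x, P x ∈ S ∧ ∀ y ∈ S, ‖x - P x‖ ≤ ‖x - y‖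

/-- Variational inequality for a metric projection onto a convex set. -/
lemma isProjOn_inner_le {F : Type*} [NormedAddCommGroup F] [InnerProductSpace ℝ F]
    {S : Set F} (hSne : S.Nonempty) (hSconv : Convex ℝ S) {P : F → F}
    (hP : IsProjOn S P) (x : F) {y : F} (hy : y ∈ S) : ⟪x - P x, y - P x⟫ ≤ 0 := by
  haveI : Nonempty S := hSne.to_subtype
  have hmin : ‖x - P x‖ = ⨅ z : S, ‖x - z‖ := by
    refine le_antisymm (le_ciInf fun z => (hP x).2 z z.2) ?_
    have hbdd : BddBelow (Set.range fun z : S => ‖x - z‖) :=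
      ⟨0, by rintro _ ⟨z, rfl⟩; exact norm_nonneg _⟩
    exact ciInf_le hbdd ⟨P x, (hP x).1⟩
  exact (norm_eq_iInf_iff_real_inner_le_zero hSconv (hP x).1).mp hmin y hy

theorem stmt0 {m : ℕ} (S : Set (EuclideanSpace ℝ (Fin m))) (hSne : S.Nonempty)
    (hSclosed : IsClosed S) (hSconv : Convex ℝ S)
    (P : EuclideanSpace ℝ (Fin m) → EuclideanSpace ℝ (Fin m)) (hP : IsProjOn S P)
    (u v w : EuclideanSpace ℝ (Fin m)) :
    2 * ⟪P (w + u) - P (w + v), u⟫ ≤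
      ‖u - v‖ ^ 2 + ‖P (w + u) - w‖ ^ 2 - ‖P (w + v) - w‖ ^ 2 := by
  set a := P (w + u) with ha
  set b := P (w + v) with hb
  have h1 : ⟪(w + v) - b, a - b⟫ ≤ 0 :=
    isProjOn_inner_le hSne hSconv hP (w + v) (hP (w + u)).1
  have h2 : (0:ℝ) ≤ ‖(u - v) - (a - b)‖ ^ 2 := sq_nonneg _
  have e1 : ‖(u - v) - (a - b)‖ ^ 2 =
      ‖u - v‖ ^ 2 - 2 * ⟪u - v, a - b⟫ + ‖a - b‖ ^ 2 := by
    rw [norm_sub_sq_real]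
  have e2 : 2 * ⟪a - b, u⟫ - (‖a - w‖ ^ 2 - ‖b - w‖ ^ 2)
      = 2 * ⟪w + v - b, a - b⟫ + 2 * ⟪u - v, a - b⟫ - ‖a - b‖ ^ 2 := by
    simp only [← real_inner_self_eq_norm_sq, inner_sub_left, inner_sub_right,
      inner_add_left, inner_add_right]
    simp only [real_inner_comm a b, real_inner_comm a u, real_inner_comm a v,
      real_inner_comm a w, real_inner_comm b u, real_inner_comm b v,
      real_inner_comm b w, real_inner_comm u v, real_inner_comm u w,
      real_inner_comm v w]
    ring
  linarith
end

section
/- Let C be a nonempty closed convex cone in R^m, p ∈ R^m, θ ∈ R^m, and γ > 0. Then min over ξ ∈ −C of [⟨p, θ−ξ⟩ + (γ/2)‖θ−ξ‖²] equals max over q ∈ C* of [⟨q, θ⟩ − ‖q−p‖²/(2γ)], and both equal (‖Π(p+γθ)‖² − ‖p‖²)/(2γ), where Π is the projection onto the dual cone C*. -/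
open scoped RealInnerProductSpace

/-- The dual cone `C* = {y : ⟨x, y⟩ ≥ 0 for all x ∈ C}`. -/
def dualCone' {E : Type*} [NormedAddCommGroup E] [InnerProductSpace ℝ E] (C : Set E) : Set E :=
  {y | ∀ x ∈ C, 0 ≤ ⟪x, y⟫}

theorem stmt2 {m : ℕ} (C : Set (EuclideanSpace ℝ (Fin m))) (hCne : C.Nonempty)
    (hCclosed : IsClosed C) (hCconv : Convex ℝ C)
    (hCcone : ∀ x ∈ C, ∀ a : ℝ, 0 ≤ a → a • x ∈ C)
    (Proj : EuclideanSpace ℝ (Fin m) → EuclideanSpace ℝ (Fin m))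
    (hProj : IsProjOn (dualCone' C) Proj)
    (p θ : EuclideanSpace ℝ (Fin m)) (γ : ℝ) (hγ : 0 < γ) :
    IsLeast {r : ℝ | ∃ ξ ∈ -C, r = ⟪p, θ - ξ⟫ + γ / 2 * ‖θ - ξ‖ ^ 2}
        ((‖Proj (p + γ • θ)‖ ^ 2 - ‖p‖ ^ 2) / (2 * γ)) ∧
      IsGreatest {r : ℝ | ∃ q ∈ dualCone' C, r = ⟪q, θ⟫ - ‖q - p‖ ^ 2 / (2 * γ)}
        ((‖Proj (p + γ • θ)‖ ^ 2 - ‖p‖ ^ 2) / (2 * γ)) := by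
  classical
  set CC : ConvexCone ℝ (EuclideanSpace ℝ (Fin m)) :=
    { carrier := C
      smul_mem' := fun c hc x hx => hCcone x hx c hc.le
      add_mem' := fun x hx y hy => by
        have hmid : (1/2 : ℝ) • x + (1/2 : ℝ) • y ∈ C :=
          hCconv hx hy (by norm_num) (by norm_num) (by norm_num)
        have := hCcone _ hmid 2 (by norm_num)
        rwa [smul_add, smul_smul, smul_smul, show (2:ℝ) * (1/2) = 1 by norm_num,
          one_smul, one_smul] at this } with hCC
  have hKeq : dualCone' C = ((ProperCone.innerDual C :
      ProperCone ℝ (EuclideanSpace ℝ (Fin m))) : Set (EuclideanSpace ℝ (Fin m))) := by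
    ext y
    simp [dualCone', ProperCone.mem_innerDual]
  have hKconv : Convex ℝ (dualCone' C) := by
    rw [hKeq]; exact PointedCone.convex (ProperCone.innerDual C).toSubmodule
  have hKadd : ∀ a ∈ dualCone' C, ∀ b ∈ dualCone' C, a + b ∈ dualCone' C := by
    intro a ha b hb x hx
    rw [inner_add_right]
    exact add_nonneg (ha x hx) (hb x hx)
  set z := p + γ • θ with hz
  obtain ⟨huK, hmin⟩ := hProj z
  set u := Proj z with hu'
  -- variational inequality for the projection
  have hvar : ∀ y ∈ dualCone' C, ⟪z - u, y - u⟫ ≤ 0 := by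
    rw [← norm_eq_iInf_iff_real_inner_le_zero hKconv huK]
    haveI : Nonempty (dualCone' C) := ⟨⟨u, huK⟩⟩
    refine le_antisymm (le_ciInf fun w => hmin w w.2) ?_
    exact ciInf_le ⟨0, fun _ ⟨w, hw⟩ => hw ▸ norm_nonneg _⟩ (⟨u, huK⟩ : dualCone' C)
  set v := z - u with hv'
  have hvu : ⟪v, u⟫ = 0 := by
    have h1 := hvar ((2:ℝ) • u) (by
      intro x hx
      rw [real_inner_smul_right]
      exact mul_nonneg (by norm_num) (huK x hx))
    have h2 := hvar 0 (fun x _ => by simp)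
    rw [zero_sub, inner_neg_right] at h2
    rw [show (2:ℝ) • u - u = u by rw [two_smul]; abel] at h1
    linarith
  have hvK : ∀ y ∈ dualCone' C, ⟪v, y⟫ ≤ 0 := by
    intro y hy
    have := hvar (y + u) (hKadd y hy u huK)
    rwa [add_sub_cancel_right] at this
  -- bipolar theorem : -v ∈ C
  have hnegv : -v ∈ C := by
    let PC : ProperCone ℝ (EuclideanSpace ℝ (Fin m)) :=
      ⟨CC.toPointedCone (ConvexCone.Pointed.of_nonempty_of_isClosed hCne hCclosed), hCclosed⟩
    have hbi := ProperCone.innerDual_innerDual PC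
    have hmem : -v ∈ ProperCone.innerDual
        (ProperCone.innerDual (PC : Set (EuclideanSpace ℝ (Fin m))) : Set (EuclideanSpace ℝ (Fin m))) := by
      rw [ProperCone.mem_innerDual]
      intro y hy
      rw [SetLike.mem_coe, ProperCone.mem_innerDual] at hy
      have hyK : y ∈ dualCone' C := hy
      have := hvK y hyK
      rw [inner_neg_right, real_inner_comm]
      linarith
    rw [hbi] at hmem
    exact hmem
  have hvdef : v = p + γ • θ - u := rfl
  -- key algebraic identities
  have key1 : ∀ ξ : EuclideanSpace ℝ (Fin m), 2*γ*(⟪p, θ - ξ⟫ + γ/2 * ‖θ-ξ‖^2) =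
      ‖v - γ•ξ‖^2 + 2*⟪v - γ•ξ, u⟫ + ‖u‖^2 - ‖p‖^2 := by
    intro ξ
    rw [hvdef]
    simp only [← real_inner_self_eq_norm_sq]
    simp only [inner_sub_left, inner_sub_right, inner_add_left, inner_add_right,
      real_inner_smul_left, real_inner_smul_right,
      real_inner_comm θ p, real_inner_comm ξ p, real_inner_comm u p,
      real_inner_comm ξ θ, real_inner_comm u θ, real_inner_comm u ξ]
    ring
  have key2 : ∀ q : EuclideanSpace ℝ (Fin m),
      ‖u‖^2 - ‖p‖^2 - 2*γ*⟪q,θ⟫ + ‖q-p‖^2 = ‖q-u‖^2 - 2*⟪v, q⟫ := by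
    intro q
    rw [hvdef]
    simp only [← real_inner_self_eq_norm_sq]
    simp only [inner_sub_left, inner_sub_right, inner_add_left, inner_add_right,
      real_inner_smul_left, real_inner_smul_right,
      real_inner_comm θ p, real_inner_comm q p, real_inner_comm u p,
      real_inner_comm q θ, real_inner_comm u θ, real_inner_comm u q]
    ring
  constructor
  · constructor
    · -- membership: ξ* = γ⁻¹ • v
      refine ⟨γ⁻¹ • v, ?_, ?_⟩
      · rw [Set.mem_neg]
        have := hCcone _ hnegv γ⁻¹ (by positivity)
        rwa [smul_neg] at this
      · have h := key1 (γ⁻¹ • v)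
        rw [show v - γ • γ⁻¹ • v = 0 by
          rw [smul_smul, mul_inv_cancel₀ hγ.ne', one_smul, sub_self]] at h
        simp only [norm_zero, inner_zero_left] at h
        rw [div_eq_iff (by positivity : (0:ℝ) < 2*γ).ne']
        linarith
    · -- lower bound
      rintro r ⟨ξ, hξ, rfl⟩
      have h := key1 ξ
      have hξC : -ξ ∈ C := Set.mem_neg.mp hξ
      have hinner : ⟪v - γ•ξ, u⟫ ≥ 0 := by
        have h1 : (0:ℝ) ≤ ⟪-ξ, u⟫ := huK _ hξC
        rw [inner_neg_left] at h1
        rw [inner_sub_left, real_inner_smul_left, hvu]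
        nlinarith
      rw [div_le_iff₀ (by positivity)]
      nlinarith [sq_nonneg ‖v - γ•ξ‖]
  · constructor
    · -- membership: q = u
      refine ⟨u, huK, ?_⟩
      have h := key2 u
      simp only [sub_self, norm_zero, hvu] at h
      rw [div_eq_iff (by positivity : (0:ℝ) < 2*γ).ne']
      have hq2 : ‖u - p‖^2 / (2*γ) * (2*γ) = ‖u-p‖^2 := by field_simp
      nlinarith
    · -- upper bound
      rintro r ⟨q, hq, rfl⟩
      have h := key2 q
      have hvq : ⟪v, q⟫ ≤ 0 := hvK q hq
      rw [le_div_iff₀ (by positivity)]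
      have hq2 : ‖q - p‖^2 / (2*γ) * (2*γ) = ‖q-p‖^2 := by field_simp
      nlinarith [sq_nonneg ‖q - u‖]
end

section
/- Let g_0 : R^n → R be convex, g = (g_1,…,g_l) with each g_j : R^n → R convex, Q ∈ R^{m×l} a matrix with nonnegative entries, and ω ∈ R^l a nonnegative vector with ω_j ≥ Σ_{i=1}^m Q_{ij} for each j. Let K_ν^{m+1} = {(x_0, x̄) ∈ R × R^m : x_0 ≥ ‖x̄‖_ν} for ν ≥ 1. Then the mapping Θ(u) = (ω^⊤ g(u) + g_0(u), Q g(u)) is K_ν^{m+1}-convex on R^n, i.e., for all u, v ∈ R^n and α ∈ [0,1], Θ(αu+(1−α)v) − αΘ(u) − (1−α)Θ(v) ∈ −K_ν^{m+1}. -/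
/-- The `ℓ_ν` norm of a finite real vector. -/
noncomputable def lnorm {m : ℕ} (ν : ℝ) (x : Fin m → ℝ) : ℝ :=
  (∑ i, |x i| ^ ν) ^ (1 / ν)

/-- The `ν`-norm cone `K_ν^{m+1} = {(x₀, x̄) : x₀ ≥ ‖x̄‖_ν}` in `ℝ × ℝ^m`. -/
def nuCone {m : ℕ} (ν : ℝ) : Set (ℝ × (Fin m → ℝ)) :=
  {x | lnorm ν x.2 ≤ x.1}

lemma aux_pair {a b ν : ℝ} (ha : 0 ≤ a) (hb : 0 ≤ b) (hν : 1 ≤ ν) :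
    a ^ ν + b ^ ν ≤ (a + b) ^ ν := by
  have h := NNReal.coe_le_coe.2 (NNReal.add_rpow_le_rpow_add a.toNNReal b.toNNReal hν)
  simpa [NNReal.coe_rpow, Real.coe_toNNReal, ha, hb, Real.toNNReal_add ha hb] using h

lemma aux_sum {ι : Type*} (s : Finset ι) {a : ι → ℝ} (ha : ∀ i, 0 ≤ a i) {ν : ℝ}
    (hν : 1 ≤ ν) : ∑ i ∈ s, a i ^ ν ≤ (∑ i ∈ s, a i) ^ ν := by
  classical
  induction s using Finset.cons_induction with
  | empty => simp [Real.zero_rpow (by positivity : ν ≠ 0)]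
  | cons i s hi ih =>
    rw [Finset.sum_cons, Finset.sum_cons]
    calc a i ^ ν + ∑ j ∈ s, a j ^ ν ≤ a i ^ ν + (∑ j ∈ s, a j) ^ ν := by linarith
    _ ≤ (a i + ∑ j ∈ s, a j) ^ ν :=
        aux_pair (ha i) (Finset.sum_nonneg fun j _ => ha j) hν

lemma lnorm_le_sum {m : ℕ} {ν : ℝ} (hν : 1 ≤ ν) (x : Fin m → ℝ) :
    lnorm ν x ≤ ∑ i, |x i| := by
  have hν0 : (0 : ℝ) < ν := lt_of_lt_of_le one_pos hν
  have h := aux_sum Finset.univ (fun i => abs_nonneg (x i)) hν (a := fun i => |x i|)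
  have hs : 0 ≤ ∑ i, |x i| := Finset.sum_nonneg fun i _ => abs_nonneg (x i)
  calc lnorm ν x ≤ ((∑ i, |x i|) ^ ν) ^ (1 / ν) := by
        apply Real.rpow_le_rpow (Finset.sum_nonneg fun i _ => by positivity) h (by positivity)
  _ = ∑ i, |x i| := by
        rw [← Real.rpow_mul hs, mul_one_div, div_self hν0.ne', Real.rpow_one]

theorem stmt3 {n l m : ℕ} (ν : ℝ) (hν : 1 ≤ ν)
    (g0 : (Fin n → ℝ) → ℝ) (hg0 : ConvexOn ℝ Set.univ g0)
    (g : Fin l → (Fin n → ℝ) → ℝ) (hg : ∀ j, ConvexOn ℝ Set.univ (g j))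
    (Q : Matrix (Fin m) (Fin l) ℝ) (hQ : ∀ i j, 0 ≤ Q i j)
    (ω : Fin l → ℝ) (hω : ∀ j, 0 ≤ ω j) (hωQ : ∀ j, ∑ i, Q i j ≤ ω j)
    (Θ : (Fin n → ℝ) → ℝ × (Fin m → ℝ))
    (hΘ : Θ = fun x => ((∑ j, ω j * g j x) + g0 x, fun i => ∑ j, Q i j * g j x))
    (u v : Fin n → ℝ) (α : ℝ) (hα0 : 0 ≤ α) (hα1 : α ≤ 1) :
    Θ (α • u + (1 - α) • v) - α • Θ u - (1 - α) • Θ v ∈ -nuCone ν := by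
  subst hΘ
  set w := α • u + (1 - α) • v with hw
  set d : Fin l → ℝ := fun j => α * g j u + (1 - α) * g j v - g j w with hd
  have hd0 : ∀ j, 0 ≤ d j := fun j => by
    have := (hg j).2 (Set.mem_univ u) (Set.mem_univ v) hα0
      (sub_nonneg.2 hα1) (by ring : α + (1 - α) = 1)
    simp only [smul_eq_mul] at this
    simp only [hd]; linarith
  have hd00 : 0 ≤ α * g0 u + (1 - α) * g0 v - g0 w := by
    have := hg0.2 (Set.mem_univ u) (Set.mem_univ v) hα0
      (sub_nonneg.2 hα1) (by ring : α + (1 - α) = 1)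
    simp only [smul_eq_mul] at this
    linarith
  rw [Set.mem_neg]
  show lnorm ν _ ≤ _
  have h2 : (-((fun i => ∑ j, Q i j * g j w) - α • (fun i => ∑ j, Q i j * g j u)
      - (1 - α) • (fun i => ∑ j, Q i j * g j v)) : Fin m → ℝ)
      = fun i => ∑ j, Q i j * d j := by
    funext i
    simp only [Pi.neg_apply, Pi.sub_apply, Pi.smul_apply, smul_eq_mul, hd,
      Finset.mul_sum, ← Finset.sum_sub_distrib, ← Finset.sum_neg_distrib]
    exact Finset.sum_congr rfl fun j _ => by ring
  have key : lnorm ν (fun i => ∑ j, Q i j * d j) ≤ ∑ j, ω j * d j := by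
    calc lnorm ν (fun i => ∑ j, Q i j * d j) ≤ ∑ i, |∑ j, Q i j * d j| :=
          lnorm_le_sum hν _
    _ = ∑ i, ∑ j, Q i j * d j := by
          apply Finset.sum_congr rfl; intro i _
          exact abs_of_nonneg (Finset.sum_nonneg fun j _ => mul_nonneg (hQ i j) (hd0 j))
    _ = ∑ j, (∑ i, Q i j) * d j := by
          rw [Finset.sum_comm]; simp [Finset.sum_mul]
    _ ≤ ∑ j, ω j * d j := by
          apply Finset.sum_le_sum; intro j _
          exact mul_le_mul_of_nonneg_right (hωQ j) (hd0 j)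
  simp only [Prod.fst_neg, Prod.snd_neg, Prod.fst_sub, Prod.snd_sub, Prod.smul_fst,
    Prod.smul_snd, smul_eq_mul]
  rw [h2]
  refine key.trans ?_
  have : ∑ j, ω j * d j ≤ (∑ j, ω j * d j) + (α * g0 u + (1 - α) * g0 v - g0 w) := by
    linarith
  refine this.trans (le_of_eq ?_)
  simp only [hd]
  have e1 : ∑ j, ω j * (α * g j u + (1 - α) * g j v - g j w)
      = α * (∑ j, ω j * g j u) + (1 - α) * (∑ j, ω j * g j v) - ∑ j, ω j * g j w := by
    rw [Finset.mul_sum, Finset.mul_sum, ← Finset.sum_add_distrib, ← Finset.sum_sub_distrib]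
    exact Finset.sum_congr rfl fun j _ => by ring
  rw [e1]
  ring
end

section
/- Let U ⊂ R^n be closed convex, G convex differentiable, J convex lower semicontinuous, C a closed convex cone with dual cone C*, Ω a differentiable C-convex mapping, Φ a C-convex mapping, and q ∈ C*. Suppose u⁺ minimizes over u ∈ U the function ⟨∇G(u^k), u⟩ + J(u) + ⟨q, ∇Ω(u^k)u + Φ(u)⟩ + (1/ε)D(u, u^k), where D is the Bregman distance of a strongly convex differentiable K. Then for every u ∈ U: ε[L(u⁺, q) − L(u, q)] ≤ D(u, u^k) − D(u, u⁺) − D(u⁺, u^k) + ε[G(u⁺) − G(u^k) − ⟨∇G(u^k), u⁺ − u^k⟩] + ε⟨q, Ω(u⁺) − Ω(u^k) − ∇Ω(u^k)(u⁺ − u^k)⟩, where L(u,p) = (G+J)(u) + ⟨p, Ω(u)+Φ(u)⟩. -/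
open scoped RealInnerProductSpace

/-- Bregman distance associated with a differentiable function `K`. -/
noncomputable def breg {E : Type*} [NormedAddCommGroup E] [InnerProductSpace ℝ E]
    [CompleteSpace E] (K : E → ℝ) (u v : E) : ℝ :=
  K u - K v - ⟪gradient K v, u - v⟫

lemma inner_gradient_eq {E : Type*} [NormedAddCommGroup E] [InnerProductSpace ℝ E]
    [CompleteSpace E] {f : E → ℝ} {x : E} (hf : DifferentiableAt ℝ f x) (v : E) :
    ⟪gradient f x, v⟫ = fderiv ℝ f x v := by
  have h := hf.hasGradientAt
  rw [hasGradientAt_iff_hasFDerivAt] at h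
  rw [h.fderiv]
  simp [InnerProductSpace.toDual_apply_apply]

lemma slope_le_fderiv {E : Type*} [NormedAddCommGroup E] [NormedSpace ℝ E]
    {f : E → ℝ} {x d : E} (hf : DifferentiableAt ℝ f x) {c : ℝ}
    (h : ∀ t ∈ Set.Ioc (0:ℝ) 1, c * t ≤ f (x + t • d) - f x) :
    c ≤ fderiv ℝ f x d := by
  have hline : HasDerivAt (fun t : ℝ => x + t • d) d 0 := by
    simpa using ((hasDerivAt_id (0:ℝ)).smul_const d).const_add x
  have hg : HasDerivAt (fun t : ℝ => f (x + t • d)) (fderiv ℝ f x d) 0 := by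
    have := (by simpa using hf.hasFDerivAt :
        HasFDerivAt f (fderiv ℝ f x) ((fun t : ℝ => x + t • d) 0))
    exact this.comp_hasDerivAt 0 hline
  have htend := hasDerivAt_iff_tendsto_slope.mp hg
  have htend' := htend.mono_left (nhdsWithin_mono _ (by
    intro t ht; exact ne_of_gt ht : Set.Ioi (0:ℝ) ⊆ {(0:ℝ)}ᶜ))
  refine ge_of_tendsto htend' ?_
  filter_upwards [Ioc_mem_nhdsGT_of_mem (by norm_num : (0:ℝ) ∈ Set.Ico (0:ℝ) 1)] with t ht
  have ht0 : (0:ℝ) < t := ht.1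
  have hct := h t ht
  rw [slope_def_field, sub_zero, le_div_iff₀ ht0]
  simpa [mul_comm, zero_smul] using hct

lemma fderiv_le_slope {E : Type*} [NormedAddCommGroup E] [NormedSpace ℝ E]
    {f : E → ℝ} {x d : E} (hf : DifferentiableAt ℝ f x) {c : ℝ}
    (h : ∀ t ∈ Set.Ioc (0:ℝ) 1, f (x + t • d) - f x ≤ c * t) :
    fderiv ℝ f x d ≤ c := by
  have : -c ≤ fderiv ℝ (fun y => -(f y)) x d := by
    refine slope_le_fderiv (hf.neg) ?_
    intro t ht
    have := h t ht
    simp only [Pi.neg_apply, neg_mul]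
    linarith
  rw [fderiv_fun_neg] at this
  simpa using this

lemma convex_grad_ineq {E : Type*} [NormedAddCommGroup E] [NormedSpace ℝ E]
    {f : E → ℝ} (hconv : ConvexOn ℝ Set.univ f) {x : E} (hdiff : DifferentiableAt ℝ f x)
    (y : E) : fderiv ℝ f x (y - x) ≤ f y - f x := by
  refine fderiv_le_slope hdiff ?_
  intro t ht
  have hxt : x + t • (y - x) = t • y + (1 - t) • x := by module
  have := hconv.2 (Set.mem_univ y) (Set.mem_univ x) ht.1.le (by linarith [ht.2] : (0:ℝ) ≤ 1 - t)
    (by ring)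
  rw [hxt]
  simp only [smul_eq_mul] at this
  calc f (t • y + (1 - t) • x) - f x ≤ t * f y + (1 - t) * f x - f x := by linarith
    _ = (f y - f x) * t := by ring

theorem stmt15 {n m : ℕ}
    (U : Set (EuclideanSpace ℝ (Fin n))) (hUclosed : IsClosed U) (hUconv : Convex ℝ U)
    (G : EuclideanSpace ℝ (Fin n) → ℝ) (hGconv : ConvexOn ℝ Set.univ G)
    (hGdiff : Differentiable ℝ G)
    (J : EuclideanSpace ℝ (Fin n) → ℝ) (hJconv : ConvexOn ℝ Set.univ J)
    (hJlsc : LowerSemicontinuous J)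
    (C : Set (EuclideanSpace ℝ (Fin m))) (hCne : C.Nonempty) (hCclosed : IsClosed C)
    (hCconv : Convex ℝ C) (hCcone : ∀ x ∈ C, ∀ a : ℝ, 0 ≤ a → a • x ∈ C)
    (Ω : EuclideanSpace ℝ (Fin n) → EuclideanSpace ℝ (Fin m)) (hΩdiff : Differentiable ℝ Ω)
    (hΩconv : ∀ u v : EuclideanSpace ℝ (Fin n), ∀ α : ℝ, 0 ≤ α → α ≤ 1 →
      -(Ω (α • u + (1 - α) • v) - α • Ω u - (1 - α) • Ω v) ∈ C)
    (Φ : EuclideanSpace ℝ (Fin n) → EuclideanSpace ℝ (Fin m))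
    (hΦconv : ∀ u v : EuclideanSpace ℝ (Fin n), ∀ α : ℝ, 0 ≤ α → α ≤ 1 →
      -(Φ (α • u + (1 - α) • v) - α • Φ u - (1 - α) • Φ v) ∈ C)
    (q : EuclideanSpace ℝ (Fin m)) (hq : q ∈ dualCone' C)
    (K : EuclideanSpace ℝ (Fin n) → ℝ) (β : ℝ) (hβ : 0 < β)
    (hKdiff : Differentiable ℝ K)
    (hKsc : ConvexOn ℝ Set.univ (fun u => K u - β / 2 * ‖u‖ ^ 2))
    (ε : ℝ) (hε : 0 < ε)
    (uk uplus : EuclideanSpace ℝ (Fin n)) (huk : uk ∈ U) (huplus : uplus ∈ U)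
    (hmin : ∀ u ∈ U,
      ⟪gradient G uk, uplus⟫ + J uplus + ⟪q, fderiv ℝ Ω uk uplus + Φ uplus⟫ +
          (1 / ε) * breg K uplus uk ≤
        ⟪gradient G uk, u⟫ + J u + ⟪q, fderiv ℝ Ω uk u + Φ u⟫ + (1 / ε) * breg K u uk) :
    ∀ u ∈ U,
      ε * ((G uplus + J uplus + ⟪q, Ω uplus + Φ uplus⟫) -
            (G u + J u + ⟪q, Ω u + Φ u⟫)) ≤
        breg K u uk - breg K u uplus - breg K uplus uk +
          ε * (G uplus - G uk - ⟪gradient G uk, uplus - uk⟫) +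
          ε * ⟪q, Ω uplus - Ω uk - fderiv ℝ Ω uk (uplus - uk)⟫ := by
  intro u hu
  set d : EuclideanSpace ℝ (Fin n) := u - uplus with hd
  set Hf : EuclideanSpace ℝ (Fin n) → ℝ :=
    fun v => ⟪gradient G uk, v⟫ + J v + ⟪q, fderiv ℝ Ω uk v + Φ v⟫ with hHf
  -- convexity of Hf along the segment
  have hHconv : ∀ t ∈ Set.Ioc (0:ℝ) 1,
      Hf (t • u + (1 - t) • uplus) ≤ t * Hf u + (1 - t) * Hf uplus := by
    intro t ht
    have ht0 := ht.1.le
    have ht1 : (0:ℝ) ≤ 1 - t := by linarith [ht.2]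
    have hJ := hJconv.2 (Set.mem_univ u) (Set.mem_univ uplus) ht0 ht1 (by ring)
    have hΦ : ⟪q, Φ (t • u + (1 - t) • uplus)⟫ ≤ t * ⟪q, Φ u⟫ + (1 - t) * ⟪q, Φ uplus⟫ := by
      have hm := hq _ (hΦconv u uplus t ht0 ht.2)
      rw [real_inner_comm] at hm
      simp only [inner_neg_right, inner_sub_right, real_inner_smul_right] at hm
      linarith
    simp only [smul_eq_mul] at hJ
    simp only [hHf, map_add, map_smul, inner_add_right, real_inner_smul_right]
    linarith
  -- key inequality via the minimality + slope limit
  have hkey : ε * (Hf uplus - Hf u) + ⟪gradient K uk, d⟫ ≤ ⟪gradient K uplus, d⟫ := by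
    rw [inner_gradient_eq (hKdiff uplus) d]
    refine slope_le_fderiv (hKdiff uplus) ?_
    intro t ht
    have hmem : t • u + (1 - t) • uplus ∈ U :=
      hUconv hu huplus ht.1.le (by linarith [ht.2]) (by ring)
    have h1 := hmin _ hmem
    have h2 := hHconv t ht
    have heq : t • u + (1 - t) • uplus = uplus + t • d := by rw [hd]; module
    have hbreg : breg K (t • u + (1 - t) • uplus) uk - breg K uplus uk
        = K (uplus + t • d) - K uplus - t * ⟪gradient K uk, d⟫ := by
      simp only [breg, heq]
      have : uplus + t • d - uk - (uplus - uk) = t • d := by abel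
      rw [show uplus + t • d - uk = (uplus - uk) + t • d by abel]
      rw [inner_add_right, real_inner_smul_right]
      ring
    have hεne : ε ≠ 0 := hε.ne'
    have hchain : Hf uplus + (1 / ε) * breg K uplus uk ≤
        t * Hf u + (1 - t) * Hf uplus + (1 / ε) * breg K (t • u + (1 - t) • uplus) uk := by
      calc Hf uplus + (1 / ε) * breg K uplus uk
          ≤ Hf (t • u + (1 - t) • uplus) + (1 / ε) * breg K (t • u + (1 - t) • uplus) uk := h1
        _ ≤ t * Hf u + (1 - t) * Hf uplus + (1 / ε) * breg K (t • u + (1 - t) • uplus) uk :=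
            add_le_add_left h2 _
    have h3 : t * (Hf uplus - Hf u) ≤
        (1 / ε) * (K (uplus + t • d) - K uplus - t * ⟪gradient K uk, d⟫) := by
      rw [← hbreg]; linarith
    have h4 : ε * (t * (Hf uplus - Hf u)) ≤
        K (uplus + t • d) - K uplus - t * ⟪gradient K uk, d⟫ := by
      have h5 := mul_le_mul_of_nonneg_left h3 hε.le
      have h6 : ε * (1 / ε * (K (uplus + t • d) - K uplus - t * ⟪gradient K uk, d⟫))
          = K (uplus + t • d) - K uplus - t * ⟪gradient K uk, d⟫ := by
        field_simp
      rwa [h6] at h5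
    nlinarith [h4]
  -- three-point identity
  have h3pt : ⟪gradient K uplus, d⟫ - ⟪gradient K uk, d⟫
      = breg K u uk - breg K u uplus - breg K uplus uk := by
    simp only [breg, hd]
    rw [show u - uk = (u - uplus) + (uplus - uk) by abel]
    rw [inner_add_right]
    ring
  have hstar : ε * (Hf uplus - Hf u) ≤ breg K u uk - breg K u uplus - breg K uplus uk := by
    rw [← h3pt]; linarith
  -- gradient inequality for G
  have hG : ⟪gradient G uk, u - uk⟫ ≤ G u - G uk := by
    rw [inner_gradient_eq (hGdiff uk)]
    exact convex_grad_ineq hGconv (hGdiff uk) u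
  -- gradient inequality for ⟨q, Ω ·⟩
  have hΩq : ⟪q, fderiv ℝ Ω uk (u - uk)⟫ ≤ ⟪q, Ω u⟫ - ⟪q, Ω uk⟫ := by
    have hgF : HasFDerivAt (fun v => ⟪q, Ω v⟫) ((innerSL ℝ q).comp (fderiv ℝ Ω uk)) uk := by
      exact ((innerSL ℝ q).hasFDerivAt).comp uk (hΩdiff uk).hasFDerivAt
    have hgconv : ConvexOn ℝ Set.univ (fun v => ⟪q, Ω v⟫) := by
      refine ⟨convex_univ, ?_⟩
      intro x _ y _ a b ha hb hab
      have hb' : b = 1 - a := by linarith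
      subst hb'
      have hm := hq _ (hΩconv x y a ha (by linarith))
      rw [real_inner_comm] at hm
      simp only [inner_neg_right, inner_sub_right, real_inner_smul_right] at hm
      simp only [smul_eq_mul]
      linarith
    have := convex_grad_ineq hgconv hgF.differentiableAt u
    rw [hgF.fderiv] at this
    simpa using this
  -- assemble
  have hεG := mul_le_mul_of_nonneg_left hG hε.le
  have hεΩ := mul_le_mul_of_nonneg_left hΩq hε.le
  simp only [hHf] at hstar
  simp only [inner_add_right, inner_sub_right, map_sub] at hstar hεG hεΩ ⊢
  nlinarith [hstar, hεG, hεΩ]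
end

section
/- Suppose (u*,p*) satisfies L(ū,p) − L(u*,p̄) ≤ δ for all p ∈ C* with ‖p‖ ≤ M₀+1, where L(u,p) = (G+J)(u) + ⟨p,Θ(u)⟩, ⟨p,Θ(u*)⟩ ≤ 0 for all p ∈ C*, ‖p*‖ ≤ M₀, and the saddle point inequality (G+J)(ū) − (G+J)(u*) ≥ ⟨p*, −Θ(ū)⟩ holds. Then ‖Π(Θ(ū))‖ ≤ δ and −M₀δ ≤ (G+J)(ū) − (G+J)(u*) ≤ δ, where Π is projection onto C*. -/
open scoped RealInnerProductSpace

lemma dualCone'_convex {E : Type*} [NormedAddCommGroup E] [InnerProductSpace ℝ E]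
    (C : Set E) : Convex ℝ (dualCone' C) := by
  intro y₁ h₁ y₂ h₂ a b ha hb hab x hx
  have := h₁ x hx
  have := h₂ x hx
  simp only [inner_add_right, real_inner_smul_right]
  positivity

lemma dualCone'_smul {E : Type*} [NormedAddCommGroup E] [InnerProductSpace ℝ E]
    {C : Set E} {y : E} (hy : y ∈ dualCone' C) {a : ℝ} (ha : 0 ≤ a) :
    a • y ∈ dualCone' C := by
  intro x hx
  rw [real_inner_smul_right]
  exact mul_nonneg ha (hy x hx)

lemma proj_vi {E : Type*} [NormedAddCommGroup E] [InnerProductSpace ℝ E]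
    {K : Set E} (hK : Convex ℝ K) {P : E → E} (hP : IsProjOn K P) (x : E)
    {y : E} (hy : y ∈ K) : ⟪x - P x, y - P x⟫ ≤ 0 := by
  haveI : Nonempty K := ⟨⟨P x, (hP x).1⟩⟩
  have h1 : ‖x - P x‖ = ⨅ w : K, ‖x - w‖ := by
    refine le_antisymm (le_ciInf fun w => (hP x).2 w w.2) ?_
    exact ciInf_le ⟨0, by rintro r ⟨w, rfl⟩; positivity⟩ (⟨P x, (hP x).1⟩ : K)
  exact (norm_eq_iInf_iff_real_inner_le_zero hK (hP x).1).mp h1 y hy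

theorem stmt19 {n m : ℕ} (C : Set (EuclideanSpace ℝ (Fin m))) (hCne : C.Nonempty)
    (hCclosed : IsClosed C) (hCconv : Convex ℝ C)
    (hCcone : ∀ x ∈ C, ∀ a : ℝ, 0 ≤ a → a • x ∈ C)
    (Proj : EuclideanSpace ℝ (Fin m) → EuclideanSpace ℝ (Fin m))
    (hProj : IsProjOn (dualCone' C) Proj)
    (f : EuclideanSpace ℝ (Fin n) → ℝ)  -- f = G + J
    (Θ : EuclideanSpace ℝ (Fin n) → EuclideanSpace ℝ (Fin m))
    (ubar ustar : EuclideanSpace ℝ (Fin n))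
    (pbar pstar : EuclideanSpace ℝ (Fin m))
    (hpbar : pbar ∈ dualCone' C) (hpstar : pstar ∈ dualCone' C)
    (M0 δ : ℝ) (hM0 : ‖pstar‖ ≤ M0)
    (hmain : ∀ p ∈ dualCone' C, ‖p‖ ≤ M0 + 1 →
      (f ubar + ⟪p, Θ ubar⟫) - (f ustar + ⟪pbar, Θ ustar⟫) ≤ δ)
    (hfeas : ∀ p ∈ dualCone' C, ⟪p, Θ ustar⟫ ≤ 0)
    (hsaddle : ⟪pstar, -Θ ubar⟫ ≤ f ubar - f ustar) :
    ‖Proj (Θ ubar)‖ ≤ δ ∧ -(M0 * δ) ≤ f ubar - f ustar ∧ f ubar - f ustar ≤ δ := by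
  have hconv := dualCone'_convex C
  have hqmem : Proj (Θ ubar) ∈ dualCone' C := (hProj (Θ ubar)).1
  have hzero : (0 : EuclideanSpace ℝ (Fin m)) ∈ dualCone' C := by
    intro z hz; simp
  have h0 : ⟪Θ ubar - Proj (Θ ubar), (0 : EuclideanSpace ℝ (Fin m)) - Proj (Θ ubar)⟫ ≤ 0 :=
    proj_vi hconv hProj (Θ ubar) hzero
  have h2 : ⟪Θ ubar - Proj (Θ ubar), (2 : ℝ) • Proj (Θ ubar) - Proj (Θ ubar)⟫ ≤ 0 :=
    proj_vi hconv hProj (Θ ubar) (dualCone'_smul hqmem (by norm_num))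
  have horth : ⟪Θ ubar - Proj (Θ ubar), Proj (Θ ubar)⟫ = 0 := by
    rw [zero_sub, inner_neg_right] at h0
    rw [two_smul, add_sub_cancel_right] at h2
    linarith
  have hqx : ⟪Proj (Θ ubar), Θ ubar⟫ = ‖Proj (Θ ubar)‖ ^ 2 := by
    rw [inner_sub_left] at horth
    rw [real_inner_comm]
    linarith [real_inner_self_eq_norm_sq (Proj (Θ ubar))]
  have hle : ∀ y ∈ dualCone' C, ⟪y, Θ ubar⟫ ≤ ⟪y, Proj (Θ ubar)⟫ := by
    intro y hy
    have h := proj_vi hconv hProj (Θ ubar) hy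
    simp only [inner_sub_left, inner_sub_right] at h horth
    linarith [real_inner_comm y (Θ ubar), real_inner_comm y (Proj (Θ ubar))]
  have hM0nn : (0 : ℝ) ≤ M0 := le_trans (norm_nonneg _) hM0
  have hA : f ubar - f ustar ≤ δ := by
    have := hmain 0 hzero (by simp; linarith)
    have hpb := hfeas pbar hpbar
    simp only [inner_zero_left] at this
    linarith
  have hB : -(M0 * ‖Proj (Θ ubar)‖) ≤ f ubar - f ustar := by
    have h1 : ⟪pstar, Θ ubar⟫ ≤ ⟪pstar, Proj (Θ ubar)⟫ := hle pstar hpstar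
    have h2 : ⟪pstar, Proj (Θ ubar)⟫ ≤ ‖pstar‖ * ‖Proj (Θ ubar)‖ := real_inner_le_norm _ _
    have h3 : ‖pstar‖ * ‖Proj (Θ ubar)‖ ≤ M0 * ‖Proj (Θ ubar)‖ :=
      mul_le_mul_of_nonneg_right hM0 (norm_nonneg _)
    rw [inner_neg_right] at hsaddle
    linarith
  have hC : ‖Proj (Θ ubar)‖ ≤ δ := by
    by_cases hq0 : Proj (Θ ubar) = 0
    · rw [hq0, norm_zero] at hB ⊢
      linarith
    · have hqpos : 0 < ‖Proj (Θ ubar)‖ := norm_pos_iff.mpr hq0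
      have hpmem : ((M0 + 1) / ‖Proj (Θ ubar)‖) • Proj (Θ ubar) ∈ dualCone' C :=
        dualCone'_smul hqmem (by positivity)
      have hpnorm : ‖((M0 + 1) / ‖Proj (Θ ubar)‖) • Proj (Θ ubar)‖ = M0 + 1 := by
        rw [norm_smul, Real.norm_eq_abs, abs_of_nonneg (by positivity)]
        field_simp
      have hinner : ⟪((M0 + 1) / ‖Proj (Θ ubar)‖) • Proj (Θ ubar), Θ ubar⟫
          = (M0 + 1) * ‖Proj (Θ ubar)‖ := by
        rw [real_inner_smul_left, hqx]
        field_simp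
      have := hmain _ hpmem (le_of_eq hpnorm)
      have hpb := hfeas pbar hpbar
      rw [hinner] at this
      nlinarith
  refine ⟨hC, ?_, hA⟩
  nlinarith [norm_nonneg (Proj (Θ ubar))]
end
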